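/- arXiv:1804.07842 — 3 statements merged into one kernel-verified Lean document; each statement's English description precedes it below -/
import Mathlib

section
/- Let V be a finite set, r ∈ ℕ, L ≥ 2r a real, and let y be a nonnegative real-valued function on {S ⊆ V : |S| ≤ r} such that y_S ≥ L · y_{S∪{i}} for every S ⊆ V and i ∈ V∖S with |S| + 1 ≤ r. Then for all S, T ⊆ V with S ∩ T = ∅ and |S| + |T| ≤ r, we have y_S ≥ Σ_{J⊆T} (−1)^{|J|} y_{S∪J} ≥ y_S / 2. -/
open Finset

theorem stmt7 {V : Type*} [Fintype V] [DecidableEq V] (r : ℕ) (L : ℝ)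
    (hL : (2 * r : ℝ) ≤ L)
    (y : Finset V → ℝ)
    (hy0 : ∀ S : Finset V, S.card ≤ r → 0 ≤ y S)
    (hmono : ∀ S : Finset V, ∀ i ∉ S, S.card + 1 ≤ r → L * y (insert i S) ≤ y S) :
    ∀ S T : Finset V, Disjoint S T → S.card + T.card ≤ r →
      (y S / 2 ≤ ∑ J ∈ T.powerset, (-1 : ℝ) ^ J.card * y (S ∪ J)) ∧
      (∑ J ∈ T.powerset, (-1 : ℝ) ^ J.card * y (S ∪ J) ≤ y S) := by
  have key : ∀ T S : Finset V, Disjoint S T → S.card + T.card ≤ r →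
      (y S * (1 - T.card / L) ≤ ∑ J ∈ T.powerset, (-1 : ℝ) ^ J.card * y (S ∪ J)) ∧
      (∑ J ∈ T.powerset, (-1 : ℝ) ^ J.card * y (S ∪ J) ≤ y S) := by
    intro T
    induction T using Finset.induction_on with
    | empty =>
      intro S _ _
      simp
    | @insert t T' ht ih =>
      intro S hdisj hcard
      have hcardT : (insert t T').card = T'.card + 1 := Finset.card_insert_of_notMem ht
      have hr1 : 1 ≤ r := by omega
      have hL2 : (2 : ℝ) ≤ L := by
        have : (2 : ℝ) * 1 ≤ 2 * r := by
          have : (1 : ℝ) ≤ r := by exact_mod_cast hr1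
          linarith
        linarith
      have hLpos : (0 : ℝ) < L := by linarith
      have htS : t ∉ S := by
        intro h
        exact (Finset.disjoint_left.mp hdisj h) (Finset.mem_insert_self t T')
      have hdisj' : Disjoint S T' :=
        hdisj.mono_right (Finset.subset_insert t T')
      have hdisj2 : Disjoint (insert t S) T' := by
        rw [Finset.disjoint_left]
        intro a ha haT'
        rcases Finset.mem_insert.mp ha with rfl | ha
        · exact ht haT'
        · exact Finset.disjoint_left.mp hdisj' ha haT'
      have hcardS' : S.card + T'.card ≤ r := by omega
      have hcardtS : (insert t S).card + T'.card ≤ r := by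
        rw [Finset.card_insert_of_notMem htS]; omega
      obtain ⟨ih1l, ih1u⟩ := ih S hdisj' hcardS'
      obtain ⟨ih2l, ih2u⟩ := ih (insert t S) hdisj2 hcardtS
      -- split the sum
      have hsplit : ∑ J ∈ (insert t T').powerset, (-1 : ℝ) ^ J.card * y (S ∪ J)
          = (∑ J ∈ T'.powerset, (-1 : ℝ) ^ J.card * y (S ∪ J))
            - ∑ J ∈ T'.powerset, (-1 : ℝ) ^ J.card * y (insert t S ∪ J) := by
        rw [Finset.sum_powerset_insert ht]
        congr 1
        rw [← Finset.sum_neg_distrib]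
        apply Finset.sum_congr rfl
        intro J hJ
        have hJT' : J ⊆ T' := Finset.mem_powerset.mp hJ
        have htJ : t ∉ J := fun h => ht (hJT' h)
        rw [Finset.card_insert_of_notMem htJ, pow_succ]
        have : S ∪ insert t J = insert t S ∪ J := by
          rw [Finset.union_insert, Finset.insert_union]
        rw [this]
        ring
      -- decay
      have hdecay : y (insert t S) ≤ y S / L := by
        have := hmono S t htS (by omega)
        rw [le_div_iff₀ hLpos]
        linarith
      have hy_tS : 0 ≤ y (insert t S) := by
        apply hy0
        rw [Finset.card_insert_of_notMem htS]; omega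
      have hyS : 0 ≤ y S := hy0 S (by omega)
      have hT'r : (T'.card : ℝ) ≤ r := by exact_mod_cast (by omega : T'.card ≤ r)
      have hfrac : (T'.card : ℝ) / L ≤ 1 / 2 := by
        rw [div_le_div_iff₀ hLpos (by norm_num : (0:ℝ) < 2)]
        linarith
      have hpos2 : 0 ≤ 1 - (T'.card : ℝ) / L := by linarith
      constructor
      · rw [hsplit, hcardT]
        have h1 : y S * (1 - (T'.card : ℝ) / L)
            ≤ ∑ J ∈ T'.powerset, (-1 : ℝ) ^ J.card * y (S ∪ J) := ih1l
        have h2 : ∑ J ∈ T'.powerset, (-1 : ℝ) ^ J.card * y (insert t S ∪ J)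
            ≤ y S / L := le_trans ih2u hdecay
        have : y S * (1 - ((T'.card : ℝ) + 1) / L)
            = y S * (1 - (T'.card : ℝ) / L) - y S / L := by
          field_simp; ring
        push_cast
        rw [this]
        linarith
      · rw [hsplit]
        have h2 : y (insert t S) * (1 - (T'.card : ℝ) / L)
            ≤ ∑ J ∈ T'.powerset, (-1 : ℝ) ^ J.card * y (insert t S ∪ J) := ih2l
        nlinarith [mul_nonneg hy_tS hpos2]
  intro S T hdisj hcard
  obtain ⟨kl, ku⟩ := key T S hdisj hcard
  refine ⟨?_, ku⟩
  have hyS : 0 ≤ y S := hy0 S (by omega)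
  rcases eq_or_lt_of_le (le_refl (0:ℝ)) with _ | _
  all_goals {
    refine le_trans ?_ kl
    rcases le_or_gt L 0 with hL0 | hLpos
    · have hr0 : r = 0 := by
        by_contra h
        have : (1:ℝ) ≤ r := by exact_mod_cast Nat.one_le_iff_ne_zero.mpr h
        linarith
      have hT0 : T.card = 0 := by omega
      rw [hT0]
      simp
      linarith
    · have hTr : (T.card : ℝ) ≤ r := by exact_mod_cast (by omega : T.card ≤ r)
      have hfrac : (T.card : ℝ) / L ≤ 1 / 2 := by
        rw [div_le_div_iff₀ hLpos (by norm_num : (0:ℝ) < 2)]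
        linarith
      nlinarith
  }
end

section
/- Let G be a c-uniform hypergraph on V = {1,…,n}, let α̃ ≥ 0 and τ ∈ ℕ, and let S ⊆ V with |S| ≤ τ. Suppose every set in 𝒮'(S) has size at most τ/10. Then 𝒮'(S) is union closed: for all S₁, S₂ ∈ 𝒮'(S), also S₁ ∪ S₂ ∈ 𝒮'(S). -/
open Finset

/-- Φ(S) = α̃ |E(S)| − |S|, where E(S) is the set of hyperedges of `G` contained in `S`. -/
noncomputable def Phi (n : ℕ) (G : Finset (Finset (Fin n))) (αt : ℝ)
    (S : Finset (Fin n)) : ℝ :=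
  αt * ((G.filter fun e => e ⊆ S).card : ℝ) - S.card

/-- Φ°(S): the maximum of Φ over candidate sets `S'` for `S` (sets with
`S ⊆ S'` and `|S'| ≤ τ`). -/
noncomputable def PhiOpt (n : ℕ) (G : Finset (Finset (Fin n))) (αt : ℝ) (τ : ℕ)
    (S : Finset (Fin n)) : ℝ :=
  sSup {x : ℝ | ∃ S' : Finset (Fin n), S ⊆ S' ∧ S'.card ≤ τ ∧ x = Phi n G αt S'}

/-- 𝒮'(S): the collection of candidate sets for `S` attaining `Φ°(S)`. -/
def OptSets (n : ℕ) (G : Finset (Finset (Fin n))) (αt : ℝ) (τ : ℕ)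
    (S : Finset (Fin n)) : Set (Finset (Fin n)) :=
  {S' | S ⊆ S' ∧ S'.card ≤ τ ∧ Phi n G αt S' = PhiOpt n G αt τ S}

theorem stmt11 (n c : ℕ) (G : Finset (Finset (Fin n))) (hG : ∀ e ∈ G, e.card = c)
    (αt : ℝ) (hαt : 0 ≤ αt) (τ : ℕ) (S : Finset (Fin n)) (hS : S.card ≤ τ)
    (hsize : ∀ S' ∈ OptSets n G αt τ S, (S'.card : ℝ) ≤ (τ : ℝ) / 10) :
    ∀ S₁ ∈ OptSets n G αt τ S, ∀ S₂ ∈ OptSets n G αt τ S,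
      S₁ ∪ S₂ ∈ OptSets n G αt τ S := by
  intro S₁ h₁ S₂ h₂
  obtain ⟨h1S, h1c, h1⟩ := h₁
  obtain ⟨h2S, h2c, h2⟩ := h₂
  have hbdd : BddAbove {x : ℝ | ∃ S' : Finset (Fin n),
      S ⊆ S' ∧ S'.card ≤ τ ∧ x = Phi n G αt S'} := by
    apply Set.Finite.bddAbove
    apply Set.Finite.subset (Set.finite_range (Phi n G αt))
    rintro x ⟨S', -, -, rfl⟩
    exact ⟨S', rfl⟩
  have hle : ∀ T : Finset (Fin n), S ⊆ T → T.card ≤ τ →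
      Phi n G αt T ≤ PhiOpt n G αt τ S := fun T hT1 hT2 =>
    le_csSup hbdd ⟨T, hT1, hT2, rfl⟩
  -- size bounds
  have hs1 : (S₁.card : ℝ) ≤ (τ : ℝ) / 10 := hsize S₁ ⟨h1S, h1c, h1⟩
  have hs2 : (S₂.card : ℝ) ≤ (τ : ℝ) / 10 := hsize S₂ ⟨h2S, h2c, h2⟩
  have hUcard : (S₁ ∪ S₂).card ≤ τ := by
    have h := Finset.card_union_le S₁ S₂
    have : ((S₁ ∪ S₂).card : ℝ) ≤ (τ : ℝ) := by
      calc ((S₁ ∪ S₂).card : ℝ) ≤ (S₁.card : ℝ) + S₂.card := by exact_mod_cast h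
        _ ≤ (τ : ℝ) / 10 + (τ : ℝ) / 10 := add_le_add hs1 hs2
        _ ≤ (τ : ℝ) := by
            have : (0:ℝ) ≤ (τ:ℝ) := Nat.cast_nonneg τ
            linarith
    exact_mod_cast this
  have hIcard : (S₁ ∩ S₂).card ≤ τ :=
    le_trans (Finset.card_le_card inter_subset_left) h1c
  have hUS : S ⊆ S₁ ∪ S₂ := h1S.trans subset_union_left
  have hIS : S ⊆ S₁ ∩ S₂ := subset_inter h1S h2S
  have hU : Phi n G αt (S₁ ∪ S₂) ≤ PhiOpt n G αt τ S := hle _ hUS hUcard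
  have hI : Phi n G αt (S₁ ∩ S₂) ≤ PhiOpt n G αt τ S := hle _ hIS hIcard
  -- supermodularity
  have hcard : (G.filter fun e => e ⊆ S₁).card + (G.filter fun e => e ⊆ S₂).card ≤
      (G.filter fun e => e ⊆ S₁ ∪ S₂).card + (G.filter fun e => e ⊆ S₁ ∩ S₂).card := by
    have key := Finset.card_union_add_card_inter (G.filter fun e => e ⊆ S₁)
      (G.filter fun e => e ⊆ S₂)
    have hsub : (G.filter fun e => e ⊆ S₁) ∪ (G.filter fun e => e ⊆ S₂) ⊆
        G.filter fun e => e ⊆ S₁ ∪ S₂ := by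
      intro e he
      simp only [Finset.mem_union, Finset.mem_filter] at he ⊢
      rcases he with ⟨hg, h⟩ | ⟨hg, h⟩
      · exact ⟨hg, h.trans subset_union_left⟩
      · exact ⟨hg, h.trans subset_union_right⟩
    have heq : (G.filter fun e => e ⊆ S₁) ∩ (G.filter fun e => e ⊆ S₂) =
        G.filter fun e => e ⊆ S₁ ∩ S₂ := by
      ext e
      simp only [Finset.mem_inter, Finset.mem_filter, Finset.subset_inter_iff]
      tauto
    have := Finset.card_le_card hsub
    rw [heq] at key
    omega
  have hVcard : (S₁ ∪ S₂).card + (S₁ ∩ S₂).card = S₁.card + S₂.card :=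
    Finset.card_union_add_card_inter S₁ S₂
  have hsuper : Phi n G αt S₁ + Phi n G αt S₂ ≤
      Phi n G αt (S₁ ∪ S₂) + Phi n G αt (S₁ ∩ S₂) := by
    unfold Phi
    have hc : ((G.filter fun e => e ⊆ S₁).card : ℝ) + (G.filter fun e => e ⊆ S₂).card ≤
        ((G.filter fun e => e ⊆ S₁ ∪ S₂).card : ℝ) + (G.filter fun e => e ⊆ S₁ ∩ S₂).card := by
      exact_mod_cast hcard
    have hv : ((S₁ ∪ S₂).card : ℝ) + (S₁ ∩ S₂).card = (S₁.card : ℝ) + S₂.card := by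
      exact_mod_cast hVcard
    nlinarith [mul_le_mul_of_nonneg_left hc hαt]
  have hEq : Phi n G αt (S₁ ∪ S₂) = PhiOpt n G αt τ S := by
    rw [h1, h2] at hsuper
    linarith
  exact ⟨hUS, hUcard, hEq⟩
end

section
/- Let G be a c-uniform hypergraph on V = {1,…,n}, let α̃ ≥ 0 and τ ∈ ℕ, let S ⊆ V and i ∈ V with |S ∪ {i}| ≤ τ. Suppose every set in 𝒮'(S) and every set in 𝒮'(S ∪ {i}) has size at most τ/10, and let S'_max(S) denote the union of all sets in 𝒮'(S) and S'_max(S ∪ {i}) the union of all sets in 𝒮'(S ∪ {i}). Then for every S'' ∈ 𝒮'(S ∪ {i}), the set S'_max(S) ∪ S'' belongs to 𝒮'(S ∪ {i}); in particular, S'_max(S) ⊆ S'_max(S ∪ {i}). -/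
open Finset
open scoped Classical

/-- S'_max(S): the union of all sets in 𝒮'(S). -/
noncomputable def Smax (n : ℕ) (G : Finset (Finset (Fin n))) (αt : ℝ) (τ : ℕ)
    (S : Finset (Fin n)) : Finset (Fin n) :=
  (Finset.univ.filter fun S' => S' ∈ OptSets n G αt τ S).sup id

lemma phiSet_finite (n : ℕ) (G : Finset (Finset (Fin n))) (αt : ℝ) (τ : ℕ)
    (S : Finset (Fin n)) :
    {x : ℝ | ∃ S' : Finset (Fin n), S ⊆ S' ∧ S'.card ≤ τ ∧ x = Phi n G αt S'}.Finite := by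
  apply Set.Finite.subset (Set.finite_range (fun S' : Finset (Fin n) => Phi n G αt S'))
  rintro x ⟨S', _, _, rfl⟩
  exact ⟨S', rfl⟩

lemma Phi_le_PhiOpt (n : ℕ) (G : Finset (Finset (Fin n))) (αt : ℝ) (τ : ℕ)
    (S S' : Finset (Fin n)) (h1 : S ⊆ S') (h2 : S'.card ≤ τ) :
    Phi n G αt S' ≤ PhiOpt n G αt τ S :=
  le_csSup (phiSet_finite n G αt τ S).bddAbove ⟨S', h1, h2, rfl⟩

lemma exists_opt (n : ℕ) (G : Finset (Finset (Fin n))) (αt : ℝ) (τ : ℕ)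
    (S : Finset (Fin n)) (hc : S.card ≤ τ) :
    ∃ A, A ∈ OptSets n G αt τ S := by
  have hne : {x : ℝ | ∃ S' : Finset (Fin n), S ⊆ S' ∧ S'.card ≤ τ ∧
      x = Phi n G αt S'}.Nonempty := ⟨Phi n G αt S, S, subset_rfl, hc, rfl⟩
  have hmem := hne.csSup_mem (phiSet_finite n G αt τ S)
  obtain ⟨A, hA1, hA2, hA3⟩ := hmem
  exact ⟨A, hA1, hA2, hA3.symm⟩

lemma Phi_supermodular (n : ℕ) (G : Finset (Finset (Fin n))) (αt : ℝ) (hαt : 0 ≤ αt)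
    (A B : Finset (Fin n)) :
    Phi n G αt A + Phi n G αt B ≤ Phi n G αt (A ∪ B) + Phi n G αt (A ∩ B) := by
  have hcard : ((A ∪ B).card : ℝ) + ((A ∩ B).card : ℝ) = (A.card : ℝ) + (B.card : ℝ) := by
    exact_mod_cast congrArg (Nat.cast (R := ℝ)) (Finset.card_union_add_card_inter A B)
  have hedge : (G.filter fun e => e ⊆ A).card + (G.filter fun e => e ⊆ B).card ≤
      (G.filter fun e => e ⊆ A ∪ B).card + (G.filter fun e => e ⊆ A ∩ B).card := by
    have h1 : (G.filter fun e => e ⊆ A) ∪ (G.filter fun e => e ⊆ B) ⊆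
        G.filter fun e => e ⊆ A ∪ B := by
      intro e he
      simp only [Finset.mem_union, Finset.mem_filter] at he ⊢
      rcases he with ⟨hg, h⟩ | ⟨hg, h⟩
      · exact ⟨hg, h.trans Finset.subset_union_left⟩
      · exact ⟨hg, h.trans Finset.subset_union_right⟩
    have h2 : (G.filter fun e => e ⊆ A) ∩ (G.filter fun e => e ⊆ B) =
        G.filter fun e => e ⊆ A ∩ B := by
      ext e
      simp only [Finset.mem_inter, Finset.mem_filter, Finset.subset_inter_iff]
      tauto
    calc (G.filter fun e => e ⊆ A).card + (G.filter fun e => e ⊆ B).card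
        = ((G.filter fun e => e ⊆ A) ∪ (G.filter fun e => e ⊆ B)).card +
          ((G.filter fun e => e ⊆ A) ∩ (G.filter fun e => e ⊆ B)).card :=
          (Finset.card_union_add_card_inter _ _).symm
      _ ≤ (G.filter fun e => e ⊆ A ∪ B).card + (G.filter fun e => e ⊆ A ∩ B).card := by
          rw [h2]
          exact Nat.add_le_add_right (Finset.card_le_card h1) _
  have hedge' : αt * ((G.filter fun e => e ⊆ A).card : ℝ) +
      αt * ((G.filter fun e => e ⊆ B).card : ℝ) ≤
      αt * ((G.filter fun e => e ⊆ A ∪ B).card : ℝ) +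
      αt * ((G.filter fun e => e ⊆ A ∩ B).card : ℝ) := by
    rw [← mul_add, ← mul_add]
    apply mul_le_mul_of_nonneg_left _ hαt
    exact_mod_cast hedge
  unfold Phi
  linarith

lemma opt_union (n : ℕ) (G : Finset (Finset (Fin n))) (αt : ℝ) (hαt : 0 ≤ αt) (τ : ℕ)
    (S : Finset (Fin n))
    (h1 : ∀ S' ∈ OptSets n G αt τ S, (S'.card : ℝ) ≤ (τ : ℝ) / 10)
    (A B : Finset (Fin n)) (hA : A ∈ OptSets n G αt τ S) (hB : B ∈ OptSets n G αt τ S) :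
    A ∪ B ∈ OptSets n G αt τ S := by
  obtain ⟨hA1, hA2, hA3⟩ := hA
  obtain ⟨hB1, hB2, hB3⟩ := hB
  have hτ0 : (0 : ℝ) ≤ (τ : ℝ) := Nat.cast_nonneg τ
  have hcardU : (A ∪ B).card ≤ τ := by
    have h1A := h1 A ⟨hA1, hA2, hA3⟩
    have h1B := h1 B ⟨hB1, hB2, hB3⟩
    have : ((A ∪ B).card : ℝ) ≤ (τ : ℝ) := by
      have := Finset.card_union_le A B
      have hc : ((A ∪ B).card : ℝ) ≤ (A.card : ℝ) + (B.card : ℝ) := by exact_mod_cast this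
      linarith
    exact_mod_cast this
  have hUle : Phi n G αt (A ∪ B) ≤ PhiOpt n G αt τ S :=
    Phi_le_PhiOpt n G αt τ S _ (hA1.trans Finset.subset_union_left) hcardU
  have hIle : Phi n G αt (A ∩ B) ≤ PhiOpt n G αt τ S :=
    Phi_le_PhiOpt n G αt τ S _ (Finset.subset_inter hA1 hB1)
      (le_trans (Finset.card_le_card Finset.inter_subset_left) hA2)
  have hsup := Phi_supermodular n G αt hαt A B
  exact ⟨hA1.trans Finset.subset_union_left, hcardU, by linarith⟩

lemma sup_opt (n : ℕ) (G : Finset (Finset (Fin n))) (αt : ℝ) (hαt : 0 ≤ αt) (τ : ℕ)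
    (S : Finset (Fin n))
    (h1 : ∀ S' ∈ OptSets n G αt τ S, (S'.card : ℝ) ≤ (τ : ℝ) / 10)
    (A : Finset (Fin n)) (hA : A ∈ OptSets n G αt τ S) :
    ∀ F : Finset (Finset (Fin n)), (∀ X ∈ F, X ∈ OptSets n G αt τ S) →
      F.sup id ∪ A ∈ OptSets n G αt τ S := by
  intro F
  induction F using Finset.induction_on with
  | empty => intro _; simpa using hA
  | @insert a F ha ih =>
      intro hF
      have hrw : ((insert a F).sup id) ∪ A = a ∪ (F.sup id ∪ A) := by
        rw [Finset.sup_insert, Finset.sup_eq_union, id_eq, Finset.union_assoc]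
      rw [hrw]
      exact opt_union n G αt hαt τ S h1 a _ (hF a (Finset.mem_insert_self a F))
        (ih fun X hX => hF X (Finset.mem_insert_of_mem hX))

lemma Smax_opt (n : ℕ) (G : Finset (Finset (Fin n))) (αt : ℝ) (hαt : 0 ≤ αt) (τ : ℕ)
    (S : Finset (Fin n)) (hc : S.card ≤ τ)
    (h1 : ∀ S' ∈ OptSets n G αt τ S, (S'.card : ℝ) ≤ (τ : ℝ) / 10) :
    Smax n G αt τ S ∈ OptSets n G αt τ S := by
  obtain ⟨A, hA⟩ := exists_opt n G αt τ S hc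
  have hmem : Smax n G αt τ S ∪ A ∈ OptSets n G αt τ S := by
    apply sup_opt n G αt hαt τ S h1 A hA
    intro X hX
    exact (Finset.mem_filter.mp hX).2
  have hsub : A ⊆ Smax n G αt τ S :=
    Finset.le_sup (f := id) (Finset.mem_filter.mpr ⟨Finset.mem_univ A, hA⟩)
  rwa [Finset.union_eq_left.mpr hsub] at hmem

theorem stmt12 (n c : ℕ) (G : Finset (Finset (Fin n))) (hG : ∀ e ∈ G, e.card = c)
    (αt : ℝ) (hαt : 0 ≤ αt) (τ : ℕ) (S : Finset (Fin n)) (i : Fin n)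
    (hS : (insert i S).card ≤ τ)
    (h1 : ∀ S' ∈ OptSets n G αt τ S, (S'.card : ℝ) ≤ (τ : ℝ) / 10)
    (h2 : ∀ S' ∈ OptSets n G αt τ (insert i S), (S'.card : ℝ) ≤ (τ : ℝ) / 10) :
    (∀ S'' ∈ OptSets n G αt τ (insert i S),
        Smax n G αt τ S ∪ S'' ∈ OptSets n G αt τ (insert i S)) ∧
      Smax n G αt τ S ⊆ Smax n G αt τ (insert i S) := by
  have hcS : S.card ≤ τ := le_trans (Finset.card_le_card (Finset.subset_insert i S)) hS
  have hSmax := Smax_opt n G αt hαt τ S hcS h1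
  obtain ⟨hM1, hM2, hM3⟩ := hSmax
  have hτ0 : (0 : ℝ) ≤ (τ : ℝ) := Nat.cast_nonneg τ
  have key : ∀ S'' ∈ OptSets n G αt τ (insert i S),
      Smax n G αt τ S ∪ S'' ∈ OptSets n G αt τ (insert i S) := by
    intro B hB
    obtain ⟨hB1, hB2, hB3⟩ := hB
    set A := Smax n G αt τ S with hAdef
    have h1A := h1 A ⟨hM1, hM2, hM3⟩
    have h2B := h2 B ⟨hB1, hB2, hB3⟩
    have hcardU : (A ∪ B).card ≤ τ := by
      have hc : ((A ∪ B).card : ℝ) ≤ (A.card : ℝ) + (B.card : ℝ) := by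
        exact_mod_cast Finset.card_union_le A B
      have : ((A ∪ B).card : ℝ) ≤ (τ : ℝ) := by linarith
      exact_mod_cast this
    have hsubU : insert i S ⊆ A ∪ B := hB1.trans Finset.subset_union_right
    have hUle : Phi n G αt (A ∪ B) ≤ PhiOpt n G αt τ (insert i S) :=
      Phi_le_PhiOpt n G αt τ (insert i S) _ hsubU hcardU
    have hIsub : S ⊆ A ∩ B :=
      Finset.subset_inter hM1 ((Finset.subset_insert i S).trans hB1)
    have hIle : Phi n G αt (A ∩ B) ≤ PhiOpt n G αt τ S :=
      Phi_le_PhiOpt n G αt τ S _ hIsub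
        (le_trans (Finset.card_le_card Finset.inter_subset_left) hM2)
    have hsup := Phi_supermodular n G αt hαt A B
    exact ⟨hsubU, hcardU, by linarith⟩
  refine ⟨key, ?_⟩
  obtain ⟨B, hB⟩ := exists_opt n G αt τ (insert i S) hS
  have hk := key B hB
  have : Smax n G αt τ S ∪ B ⊆ Smax n G αt τ (insert i S) :=
    Finset.le_sup (f := id) (Finset.mem_filter.mpr ⟨Finset.mem_univ _, hk⟩)
  exact Finset.subset_union_left.trans this
end
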